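/- arXiv:1804.05466 — 4 statements merged into one kernel-verified Lean document; each statement's English description precedes it below -/
import Mathlib

section
/- Let u : Ω ⊆ ℝⁿ → ℝ^N be C², γ : I → Ω a solution of the rescaled flow γ'(t) = (|Du|²/|ξᵀDu|²) Du(γ(t))ᵀ ξ with Du(γ(t))ᵀξ ≠ 0 on I. If along γ the identity d/dt (½|Du(γ(t))|²) = ((|Du|²/|ξᵀDu|²) · (ξᵀDu)ᵀ · D(½|Du|²))(γ(t)) holds, and u satisfies Du ∇(½|Du|²) = 0 on Ω, then |Du(γ(t))| is constant on I and t ↦ ξ · u(γ(t)) is an affine function of t. -/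
open scoped RealInnerProductSpace BigOperators

lemma const_of_hasDerivAt_zero {s : Set ℝ} (hs : Convex ℝ s) {g : ℝ → ℝ}
    (hg : ∀ t ∈ s, HasDerivAt g 0 t) : ∀ a ∈ s, ∀ b ∈ s, g a = g b := by
  intro a ha b hb
  have h0 : ((1 : ℝ →L[ℝ] ℝ).smulRight (0 : ℝ)) = 0 := by ext x; simp
  have key := hs.norm_image_sub_le_of_norm_hasFDerivWithin_le
    (f := g) (f' := fun _ => (1 : ℝ →L[ℝ] ℝ).smulRight (0 : ℝ)) (C := 0)
    (fun x hx => ((hg x hx).hasFDerivAt).hasFDerivWithinAt)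
    (fun x _ => by rw [h0]; simp) hb ha
  have : ‖g a - g b‖ ≤ 0 := by simpa using key
  have := le_antisymm this (norm_nonneg _)
  have := norm_eq_zero.mp this
  linarith [sub_eq_zero.mp this]

noncomputable def frob2 {n N : ℕ} (u : EuclideanSpace ℝ (Fin n) → EuclideanSpace ℝ (Fin N))
    (x : EuclideanSpace ℝ (Fin n)) : ℝ :=
  ∑ i, ‖fderiv ℝ u x (EuclideanSpace.single i 1)‖ ^ 2

noncomputable def lapl {n N : ℕ} (u : EuclideanSpace ℝ (Fin n) → EuclideanSpace ℝ (Fin N))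
    (x : EuclideanSpace ℝ (Fin n)) : EuclideanSpace ℝ (Fin N) :=
  ∑ i, fderiv ℝ (fun y => fderiv ℝ u y (EuclideanSpace.single i 1)) x (EuclideanSpace.single i 1)

noncomputable def perpProj {n N : ℕ}
    (T : EuclideanSpace ℝ (Fin n) →L[ℝ] EuclideanSpace ℝ (Fin N))
    (w : EuclideanSpace ℝ (Fin N)) : EuclideanSpace ℝ (Fin N) :=
  (Submodule.orthogonalProjectionOnto (LinearMap.range (T.toLinearMap))ᗮ w : EuclideanSpace ℝ (Fin N))

noncomputable def inftyLap {n N : ℕ} (u : EuclideanSpace ℝ (Fin n) → EuclideanSpace ℝ (Fin N))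
    (x : EuclideanSpace ℝ (Fin n)) : EuclideanSpace ℝ (Fin N) :=
  fderiv ℝ u x (gradient (fun y => (1/2 : ℝ) * frob2 u y) x)
    + frob2 u x • perpProj (fderiv ℝ u x) (lapl u x)

noncomputable def scalarInftyLap {n : ℕ} (f : EuclideanSpace ℝ (Fin n) → ℝ)
    (x : EuclideanSpace ℝ (Fin n)) : ℝ :=
  ⟪gradient f x, fderiv ℝ (fun y => gradient f y) x (gradient f x)⟫

noncomputable def DuT {n N : ℕ} (u : EuclideanSpace ℝ (Fin n) → EuclideanSpace ℝ (Fin N))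
    (x : EuclideanSpace ℝ (Fin n)) (ξ : EuclideanSpace ℝ (Fin N)) : EuclideanSpace ℝ (Fin n) :=
  ContinuousLinearMap.adjoint (fderiv ℝ u x) ξ

/-- Along the rescaled gradient flow `γ' = (|Du|²/|Duᵀξ|²) Du(γ)ᵀξ` with `Du(γ(t))ᵀξ ≠ 0`,
if the differential identity
`d/dt (½|Du(γ(t))|²) = ((|Du|²/|ξᵀDu|²) (ξᵀDu)ᵀ · D(½|Du|²))(γ(t))` holds and `u` satisfies
the tangential equation `Du ∇(½|Du|²) = 0` on `Ω`, then `|Du(γ(t))|` is constant on `I` and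
`t ↦ ξ · u(γ(t))` is affine. -/
theorem rescaled_flow_constant_and_affine {n N : ℕ}
    (Ω : Set (EuclideanSpace ℝ (Fin n))) (hΩ : IsOpen Ω)
    (u : EuclideanSpace ℝ (Fin n) → EuclideanSpace ℝ (Fin N))
    (hu : ContDiffOn ℝ 2 u Ω)
    (ξ : EuclideanSpace ℝ (Fin N)) (hξ : ‖ξ‖ = 1)
    (I : Set ℝ) (hI : I.OrdConnected)
    (γ : ℝ → EuclideanSpace ℝ (Fin n))
    (hγΩ : ∀ t ∈ I, γ t ∈ Ω)
    (hne : ∀ t ∈ I, DuT u (γ t) ξ ≠ 0)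
    (hflow : ∀ t ∈ I,
      HasDerivAt γ ((frob2 u (γ t) / ‖DuT u (γ t) ξ‖ ^ 2) • DuT u (γ t) ξ) t)
    (hident : ∀ t ∈ I,
      HasDerivAt (fun s => (1/2 : ℝ) * frob2 u (γ s))
        ((frob2 u (γ t) / ‖DuT u (γ t) ξ‖ ^ 2) *
          ⟪DuT u (γ t) ξ, gradient (fun y => (1/2 : ℝ) * frob2 u y) (γ t)⟫) t)
    (htang : ∀ x ∈ Ω, fderiv ℝ u x (gradient (fun y => (1/2 : ℝ) * frob2 u y) x) = 0) :
    (∀ s ∈ I, ∀ t ∈ I, ‖frob2 u (γ s)‖ = ‖frob2 u (γ t)‖) ∧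
    (∃ c d : ℝ, ∀ t ∈ I, (⟪ξ, u (γ t)⟫ : ℝ) = c * t + d) := by
  have hconv : Convex ℝ I := hI.convex
  -- derivative of ½ frob2 ∘ γ is zero on I
  have hzero : ∀ t ∈ I, HasDerivAt (fun s => (1/2 : ℝ) * frob2 u (γ s)) 0 t := by
    intro t ht
    have h := hident t ht
    have hg : (⟪DuT u (γ t) ξ, gradient (fun y => (1/2 : ℝ) * frob2 u y) (γ t)⟫ : ℝ) = 0 := by
      rw [DuT, ContinuousLinearMap.adjoint_inner_left, htang _ (hγΩ t ht), inner_zero_right]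
    rwa [hg, mul_zero] at h
  have hfrob : ∀ s ∈ I, ∀ t ∈ I, frob2 u (γ s) = frob2 u (γ t) := by
    intro s hs t ht
    have := const_of_hasDerivAt_zero hconv hzero s hs t ht
    linarith
  refine ⟨fun s hs t ht => by rw [hfrob s hs t ht], ?_⟩
  rcases Set.eq_empty_or_nonempty I with hIe | ⟨t₀, ht₀⟩
  · exact ⟨0, 0, fun t ht => absurd (hIe ▸ ht) (Set.notMem_empty t)⟩
  have hderiv : ∀ t ∈ I, HasDerivAt (fun s => (⟪ξ, u (γ s)⟫ : ℝ)) (frob2 u (γ t)) t := by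
    intro t ht
    have hud : HasFDerivAt u (fderiv ℝ u (γ t)) (γ t) := by
      have hca : ContDiffAt ℝ 2 u (γ t) := hu.contDiffAt (hΩ.mem_nhds (hγΩ t ht))
      exact (hca.differentiableAt (by norm_num)).hasFDerivAt
    have h1 := hud.comp_hasDerivAt t (hflow t ht)
    have h2 := (innerSL ℝ ξ).hasFDerivAt.comp_hasDerivAt t h1
    have key : (innerSL ℝ ξ) ((fderiv ℝ u (γ t))
        ((frob2 u (γ t) / ‖DuT u (γ t) ξ‖ ^ 2) • DuT u (γ t) ξ)) = frob2 u (γ t) := by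
      rw [map_smul, map_smul]
      have h3 : (innerSL ℝ ξ) ((fderiv ℝ u (γ t)) (DuT u (γ t) ξ)) = ‖DuT u (γ t) ξ‖ ^ 2 := by
        simp only [innerSL_apply_apply, DuT]
        rw [← ContinuousLinearMap.adjoint_inner_left, real_inner_self_eq_norm_sq]
      rw [smul_eq_mul, h3]
      have hn : ‖DuT u (γ t) ξ‖ ^ 2 ≠ 0 := pow_ne_zero _ (norm_ne_zero_iff.mpr (hne t ht))
      exact div_mul_cancel₀ _ hn
    rwa [key] at h2
  set c := frob2 u (γ t₀) with hc
  have hderiv' : ∀ t ∈ I, HasDerivAt (fun s => (⟪ξ, u (γ s)⟫ : ℝ) - c * s) 0 t := by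
    intro t ht
    have := (hderiv t ht).sub ((hasDerivAt_id t).const_mul c)
    rw [hfrob t ht t₀ ht₀, ← hc, mul_one, sub_self] at this
    exact this
  have hconst := const_of_hasDerivAt_zero hconv hderiv'
  refine ⟨c, (⟪ξ, u (γ t₀)⟫ : ℝ) - c * t₀, fun t ht => ?_⟩
  have := hconst t ht t₀ ht₀
  linarith
end

section
/- Let Ω ⊆ ℝⁿ be open and connected, f ∈ C²(Ω, ℝ), V : ℝ → ℝ^N twice differentiable with |V'(s)| = 1 for all s ∈ f(Ω), and define u = V ∘ f : Ω → ℝ^N. If u satisfies the tangential equation (Du ⊗ Du) : D²u = 0 on Ω, then f satisfies the scalar ∞-Laplace equation Δ_∞ f := Σ_{i,j} D_i f D_j f D²_{ij} f = 0 on Ω. -/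
open scoped RealInnerProductSpace BigOperators

/-- If `u = V ∘ f` with `f` C², `V` twice differentiable with unit speed on `f(Ω)`, and `u`
satisfies the tangential equation `(Du ⊗ Du) : D²u = Du ∇(½|Du|²) = 0` on the open connected
set `Ω`, then `f` satisfies the scalar ∞-Laplace equation `Δ∞ f = 0` on `Ω`. -/
theorem scalar_inftyHarmonic_of_composition {n N : ℕ}
    (Ω : Set (EuclideanSpace ℝ (Fin n))) (hΩ : IsOpen Ω) (hconn : IsConnected Ω)
    (f : EuclideanSpace ℝ (Fin n) → ℝ) (hf : ContDiffOn ℝ 2 f Ω)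
    (V : ℝ → EuclideanSpace ℝ (Fin N))
    (hV1 : Differentiable ℝ V) (hV2 : Differentiable ℝ (deriv V))
    (hVunit : ∀ s ∈ f '' Ω, ‖deriv V s‖ = 1)
    (u : EuclideanSpace ℝ (Fin n) → EuclideanSpace ℝ (Fin N))
    (hu : ∀ x ∈ Ω, u x = V (f x))
    (htang : ∀ x ∈ Ω, fderiv ℝ u x (gradient (fun y => (1/2 : ℝ) * frob2 u y) x) = 0) :
    ∀ x ∈ Ω, scalarInftyLap f x = 0 := by
  intro x hx
  have hmem : Ω ∈ nhds x := hΩ.mem_nhds hx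
  set G : EuclideanSpace ℝ (Fin n) → EuclideanSpace ℝ (Fin n) := fun y => gradient f y with hGdef
  have hgrad_inner : ∀ (g : EuclideanSpace ℝ (Fin n) → ℝ) (z v : EuclideanSpace ℝ (Fin n)),
      ⟪gradient g z, v⟫ = fderiv ℝ g z v := by
    intro g z v
    rw [gradient, InnerProductSpace.toDual_symm_apply]
  have hfd : ∀ y ∈ Ω, DifferentiableAt ℝ f y := fun y hy =>
    (hf.contDiffAt (hΩ.mem_nhds hy)).differentiableAt (by norm_num)
  -- derivative of u on Ω
  have hud : ∀ y ∈ Ω, HasFDerivAt u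
      ((ContinuousLinearMap.smulRight (1 : ℝ →L[ℝ] ℝ) (deriv V (f y))).comp (fderiv ℝ f y)) y := by
    intro y hy
    have h1 : HasFDerivAt (V ∘ f)
        ((ContinuousLinearMap.smulRight (1 : ℝ →L[ℝ] ℝ) (deriv V (f y))).comp (fderiv ℝ f y)) y :=
      ((hV1 (f y)).hasDerivAt.hasFDerivAt).comp y (hfd y hy).hasFDerivAt
    apply h1.congr_of_eventuallyEq
    filter_upwards [hΩ.mem_nhds hy] with z hz
    exact hu z hz
  -- the applied form of fderiv u
  have hudv : ∀ y ∈ Ω, ∀ v, fderiv ℝ u y v = fderiv ℝ f y v • deriv V (f y) := by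
    intro y hy v
    rw [(hud y hy).fderiv]
    simp
  -- frob2 u = ‖∇f‖² on Ω
  have hfrob : ∀ y ∈ Ω, frob2 u y = ⟪G y, G y⟫ := by
    intro y hy
    have hnorm : ‖deriv V (f y)‖ = 1 := hVunit _ ⟨y, hy, rfl⟩
    have h1 : frob2 u y = ∑ i, (fderiv ℝ f y (EuclideanSpace.single i 1)) ^ 2 := by
      unfold frob2
      refine Finset.sum_congr rfl fun i _ => ?_
      rw [hudv y hy]
      rw [norm_smul, hnorm]
      simp [sq_abs]
    rw [h1, real_inner_self_eq_norm_sq]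
    have h2 : ∀ i, fderiv ℝ f y (EuclideanSpace.single i 1) = G y i := by
      intro i
      rw [← hgrad_inner f y (EuclideanSpace.single i 1)]
      rw [EuclideanSpace.inner_single_right]
      simp [hGdef]
    have h3 : ‖G y‖ ^ 2 = ∑ i, (G y i) ^ 2 := by
      rw [← real_inner_self_eq_norm_sq]
      rw [PiLp.inner_apply]
      simp [mul_comm]
    rw [h3]
    exact Finset.sum_congr rfl fun i _ => by rw [h2]
  -- G is differentiable at x
  have hfd2 : ContDiffAt ℝ 1 (fderiv ℝ f) x := (hf.contDiffAt hmem).fderiv_right (by norm_num)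
  have hGdiff : DifferentiableAt ℝ G x := by
    have : G = fun y => (InnerProductSpace.toDual ℝ (EuclideanSpace ℝ (Fin n))).symm
        (fderiv ℝ f y) := rfl
    rw [this]
    exact DifferentiableAt.comp x
      ((InnerProductSpace.toDual ℝ
        (EuclideanSpace ℝ (Fin n))).symm.toContinuousLinearEquiv.differentiable.differentiableAt)
      (hfd2.differentiableAt (by norm_num))
  set DG := fderiv ℝ G x with hDGdef
  have hDG : HasFDerivAt G DG x := hGdiff.hasFDerivAt
  -- fderiv of g := ½ frob2 u at x
  have hh : HasFDerivAt (fun y => (1/2 : ℝ) * ⟪G y, G y⟫)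
      ((1/2 : ℝ) • ((fderivInnerCLM ℝ (G x, G x)).comp (DG.prod DG))) x :=
    (hDG.inner ℝ hDG).const_smul (1/2 : ℝ)
  have heq : (fun y => (1/2 : ℝ) * frob2 u y) =ᶠ[nhds x]
      (fun y => (1/2 : ℝ) * ⟪G y, G y⟫) := by
    filter_upwards [hmem] with z hz
    rw [hfrob z hz]
  have hg : HasFDerivAt (fun y => (1/2 : ℝ) * frob2 u y)
      ((1/2 : ℝ) • ((fderivInnerCLM ℝ (G x, G x)).comp (DG.prod DG))) x :=
    hh.congr_of_eventuallyEq heq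
  set w := gradient (fun y => (1/2 : ℝ) * frob2 u y) x with hwdef
  -- key identity: fderiv f x w = scalarInftyLap f x
  have hfw : fderiv ℝ f x w = scalarInftyLap f x := by
    have e1 : fderiv ℝ f x w = ⟪G x, w⟫ := (hgrad_inner f x w).symm
    have e2 : ⟪G x, w⟫ = ⟪w, G x⟫ := real_inner_comm _ _
    have e3 : ⟪w, G x⟫ = fderiv ℝ (fun y => (1/2 : ℝ) * frob2 u y) x (G x) :=
      hgrad_inner _ x (G x)
    have e4 : fderiv ℝ (fun y => (1/2 : ℝ) * frob2 u y) x (G x) = ⟪G x, DG (G x)⟫ := by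
      rw [hg.fderiv]
      simp [fderivInnerCLM]
      have hc : ∑ i, DG (G x) i * G x i = ∑ i, G x i * DG (G x) i :=
        Finset.sum_congr rfl fun i _ => mul_comm _ _
      rw [real_inner_comm (G x) (DG (G x))]; ring
    rw [e1, e2, e3, e4]
    rfl
  -- use the tangential equation
  have key := htang x hx
  rw [← hwdef] at key
  rw [hudv x hx w] at key
  have hVne : deriv V (f x) ≠ 0 := by
    intro h0
    have := hVunit _ ⟨x, hx, rfl⟩
    rw [h0, norm_zero] at this
    exact one_ne_zero this.symm
  rcases smul_eq_zero.mp key with h | h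
  · rw [← hfw]; exact h
  · exact absurd h hVne
end

section
/- Let Ω ⊆ ℝⁿ be open and connected, and let u ∈ C²(Ω, ℝ^N) have the form u = a + ξ f on Ω with a ∈ ℝ^N, ξ ∈ 𝕊^{N-1}, and f ∈ C²(Ω, ℝ). Then u solves the ∞-Laplace system (Du ⊗ Du + |Du|² P^⊥(Du) ⊗ I) : D²u = 0 if and only if f solves the scalar ∞-Laplace equation Δ_∞ f = Σ_{i,j} D_i f D_j f D²_{ij} f = 0. -/
open scoped RealInnerProductSpace BigOperators

section Aux

variable {n N : ℕ}

local notation "E" => EuclideanSpace ℝ (Fin n)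
local notation "F" => EuclideanSpace ℝ (Fin N)

lemma aux_inner_grad (f : E → ℝ) (x v : E) : ⟪gradient f x, v⟫ = fderiv ℝ f x v :=
  InnerProductSpace.toDual_symm_apply

lemma aux_inner_single (w : E) (i : Fin n) : ⟪w, EuclideanSpace.single i (1:ℝ)⟫ = w i := by
  simp [EuclideanSpace.inner_single_right]

lemma aux_grad_apply (f : E → ℝ) (x : E) (i : Fin n) :
    gradient f x i = fderiv ℝ f x (EuclideanSpace.single i 1) := by
  rw [← aux_inner_single (gradient f x) i, aux_inner_grad]

set_option maxHeartbeats 1000000 in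
/-- The pointwise reduction `Δ∞ u = (Δ∞ f) • ξ`. -/
lemma aux_key (Ω : Set E) (hΩ : IsOpen Ω) (a ξ : F) (hξ : ‖ξ‖ = 1)
    (f : E → ℝ) (hf : ContDiffOn ℝ 2 f Ω)
    (u : E → F) (huform : ∀ x ∈ Ω, u x = a + f x • ξ)
    {x : E} (hx : x ∈ Ω) :
    inftyLap u x = scalarInftyLap f x • ξ := by
  have hmem : Ω ∈ nhds x := hΩ.mem_nhds hx
  -- first-order differentiability data
  have hfd : ∀ y ∈ Ω, DifferentiableAt ℝ f y := fun y hy =>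
    (hf.contDiffAt (hΩ.mem_nhds hy)).differentiableAt two_ne_zero
  have hfx : ContDiffAt ℝ 2 f x := hf.contDiffAt hmem
  have hfd2 : DifferentiableAt ℝ (fderiv ℝ f) x :=
    (hfx.fderiv_right (m := 1) (by norm_num)).differentiableAt one_ne_zero
  set L := fderiv ℝ f x with hL
  set g := gradient f x with hg
  set H2 := fderiv ℝ (fderiv ℝ f) x with hH2
  set e : Fin n → E := fun i => EuclideanSpace.single i 1 with he
  -- derivative of u on Ω
  have hA : ∀ y ∈ Ω, fderiv ℝ u y = (fderiv ℝ f y).smulRight ξ := by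
    intro y hy
    have hev : u =ᶠ[nhds y] fun z => a + f z • ξ :=
      Filter.eventuallyEq_of_mem (hΩ.mem_nhds hy) huform
    rw [hev.fderiv_eq, fderiv_const_add, fderiv_smul_const (hfd y hy)]
  -- components of the gradient
  have hgi : ∀ i, g i = L (e i) := fun i => aux_grad_apply f x i
  -- frob2 on Ω
  have hfrob : ∀ y ∈ Ω, frob2 u y = ∑ i, (fderiv ℝ f y (e i)) ^ 2 := by
    intro y hy
    refine Finset.sum_congr rfl fun i _ => ?_
    rw [hA y hy]
    simp [norm_smul, hξ, sq_abs]
    rfl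
  -- differentiability of the partial derivatives
  have hcid : ∀ i, DifferentiableAt ℝ (fun y => fderiv ℝ f y (e i)) x := fun i =>
    hfd2.clm_apply (differentiableAt_const _)
  have hci : ∀ i, fderiv ℝ (fun y => fderiv ℝ f y (e i)) x = H2.flip (e i) := by
    intro i
    rw [fderiv_clm_apply hfd2 (differentiableAt_const _)]
    simp
    rfl
  -- the Laplacian term
  have hlapl : lapl u x = (∑ i, H2 (e i) (e i)) • ξ := by
    unfold lapl
    rw [Finset.sum_smul]
    refine Finset.sum_congr rfl fun i _ => ?_
    have hev : (fun y => fderiv ℝ u y (EuclideanSpace.single i 1))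
        =ᶠ[nhds x] fun y => (fderiv ℝ f y (e i)) • ξ := by
      filter_upwards [hmem] with y hy
      rw [hA y hy]; rfl
    rw [hev.fderiv_eq, fderiv_smul_const (hcid i)]
    simp [hci i]
    rfl
  -- derivative of the energy density
  have hψ : HasFDerivAt (fun y => (1/2 : ℝ) * ∑ i, (fderiv ℝ f y (e i)) ^ 2)
      ((1/2 : ℝ) • ∑ i, ((2 * fderiv ℝ f x (e i)) • H2.flip (e i))) x := by
    refine HasFDerivAt.const_mul ?_ _
    refine HasFDerivAt.fun_sum fun i _ => ?_
    have h1 : HasFDerivAt (fun y => fderiv ℝ f y (e i)) (H2.flip (e i)) x := by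
      rw [← hci i]; exact (hcid i).hasFDerivAt
    have h2 := h1.mul h1
    have heq : (fun y => fderiv ℝ f y (e i) ^ 2)
        = fun y => (fderiv ℝ f y (e i)) * (fderiv ℝ f y (e i)) := by
      funext y; ring
    rw [heq, two_mul, add_smul]
    exact h2
  have hφ : fderiv ℝ (fun y => (1/2 : ℝ) * frob2 u y) x
      = (1/2 : ℝ) • ∑ i, ((2 * fderiv ℝ f x (e i)) • H2.flip (e i)) := by
    have hev : (fun y => (1/2 : ℝ) * frob2 u y)
        =ᶠ[nhds x] fun y => (1/2 : ℝ) * ∑ i, (fderiv ℝ f y (e i)) ^ 2 := by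
      filter_upwards [hmem] with y hy
      rw [hfrob y hy]
    rw [hev.fderiv_eq, hψ.fderiv]
  -- the first term of inftyLap
  have hterm1 : fderiv ℝ u x (gradient (fun y => (1/2 : ℝ) * frob2 u y) x)
      = (∑ i, L (e i) * H2 g (e i)) • ξ := by
    rw [hA x hx, ContinuousLinearMap.smulRight_apply]
    congr 1
    have h1 : L (gradient (fun y => (1/2 : ℝ) * frob2 u y) x)
        = fderiv ℝ (fun y => (1/2 : ℝ) * frob2 u y) x g := by
      rw [← aux_inner_grad f x, real_inner_comm, aux_inner_grad]
    rw [h1, hφ]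
    simp only [ContinuousLinearMap.coe_smul', Pi.smul_apply, ContinuousLinearMap.coe_sum',
      Finset.sum_apply, ContinuousLinearMap.coe_smul, ContinuousLinearMap.smul_apply,
      ContinuousLinearMap.flip_apply, smul_eq_mul, Finset.mul_sum]
    refine Finset.sum_congr rfl fun i _ => ?_
    ring
  -- scalar infinity Laplacian
  have hsc : scalarInftyLap f x = ∑ i, L (e i) * H2 g (e i) := by
    have hgradfun : (fun y => gradient f y) = fun y => ∑ i, (fderiv ℝ f y (e i)) • e i := by
      funext y
      ext j
      have h1 : gradient f y j = fderiv ℝ f y (e j) := aux_grad_apply f y j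
      have h2 : (∑ i, (fderiv ℝ f y (e i)) • e i) j = ∑ i, (fderiv ℝ f y (e i)) • (e i j) := by
        rw [show ((∑ i, (fderiv ℝ f y (e i)) • e i) j)
            = ∑ i, ((fderiv ℝ f y (e i)) • e i) j from
          by rw [WithLp.ofLp_sum, Finset.sum_apply]]
        rfl
      rw [h1, h2]
      simp [he, EuclideanSpace.single_apply]
    have hgradd : HasFDerivAt (fun y => gradient f y)
        (∑ i, (H2.flip (e i)).smulRight (e i)) x := by
      rw [hgradfun]
      refine HasFDerivAt.fun_sum fun i _ => ?_
      have h1 : HasFDerivAt (fun y => fderiv ℝ f y (e i)) (H2.flip (e i)) x := by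
        rw [← hci i]; exact (hcid i).hasFDerivAt
      exact h1.smul_const (e i)
    unfold scalarInftyLap
    rw [hgradd.fderiv]
    rw [ContinuousLinearMap.sum_apply, inner_sum]
    refine Finset.sum_congr rfl fun i _ => ?_
    rw [ContinuousLinearMap.smulRight_apply, ContinuousLinearMap.flip_apply,
      real_inner_smul_right, aux_inner_single]
    rw [← hg, hgi i]
    ring
  -- the projection term vanishes
  have hterm2 : frob2 u x • perpProj (fderiv ℝ u x) (lapl u x) = 0 := by
    by_cases hL0 : L = 0
    · have : frob2 u x = 0 := by
        rw [hfrob x hx]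
        refine Finset.sum_eq_zero fun i _ => ?_
        rw [← hL, hL0]; simp
      rw [this, zero_smul]
    · -- lapl u x is in the range of fderiv u x
      obtain ⟨v, hv⟩ : ∃ v, L v ≠ 0 := by
        by_contra h
        push_neg at h
        exact hL0 (ContinuousLinearMap.ext fun v => by simpa using h v)
      have hmemrange : lapl u x ∈ LinearMap.range (fderiv ℝ u x).toLinearMap := by
        rw [hlapl]
        refine ⟨((∑ i, H2 (e i) (e i)) / L v) • v, ?_⟩
        rw [hA x hx]
        simp only [ContinuousLinearMap.coe_coe, ContinuousLinearMap.smulRight_apply, map_smul,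
          smul_eq_mul]
        rw [← hL, smul_smul, div_mul_cancel₀ _ hv]
      have : perpProj (fderiv ℝ u x) (lapl u x) = 0 := by
        unfold perpProj
        rw [Submodule.orthogonalProjectionOnto_apply_of_mem_orthogonal
          (Submodule.le_orthogonal_orthogonal _ hmemrange)]
        simp
      rw [this, smul_zero]
  unfold inftyLap
  rw [hterm1, hterm2, add_zero, hsc]

end Aux

/-- For `u = a + ξ f` on an open connected `Ω` with `|ξ| = 1` and `f` C², `u` solves the
∞-Laplace system `(Du ⊗ Du + |Du|² P^⊥(Du) ⊗ I) : D²u = 0` if and only if `f` solves the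
scalar ∞-Laplace equation `Δ∞ f = 0`. -/
theorem inftyLap_iff_scalar {n N : ℕ}
    (Ω : Set (EuclideanSpace ℝ (Fin n))) (hΩ : IsOpen Ω) (hconn : IsConnected Ω)
    (a ξ : EuclideanSpace ℝ (Fin N)) (hξ : ‖ξ‖ = 1)
    (f : EuclideanSpace ℝ (Fin n) → ℝ) (hf : ContDiffOn ℝ 2 f Ω)
    (u : EuclideanSpace ℝ (Fin n) → EuclideanSpace ℝ (Fin N))
    (hu : ContDiffOn ℝ 2 u Ω)
    (huform : ∀ x ∈ Ω, u x = a + f x • ξ) :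
    (∀ x ∈ Ω, inftyLap u x = 0) ↔ (∀ x ∈ Ω, scalarInftyLap f x = 0) := by
  have hξ0 : ξ ≠ 0 := by
    intro h; rw [h, norm_zero] at hξ; norm_num at hξ
  constructor
  · intro h x hx
    have h1 := h x hx
    rw [aux_key Ω hΩ a ξ hξ f hf u huform hx, smul_eq_zero] at h1
    exact h1.resolve_right hξ0
  · intro h x hx
    rw [aux_key Ω hΩ a ξ hξ f hf u huform hx, h x hx, zero_smul]
end

section
/- Let Ω ⊆ ℝⁿ be open and connected, and suppose u ∈ C²(Ω, ℝ^N) satisfies: Ω is covered by open balls {B_m} such that on each B_m, u = a_m + ξ_m f_m with a_m ∈ ℝ^N, ξ_m ∈ 𝕊^{N-1}, f_m ∈ C²(B_m, ℝ), and |Df_m| > 0 on B_m. Then there exist a global a ∈ ℝ^N, ξ ∈ 𝕊^{N-1} (up to sign) and f ∈ C²(Ω, ℝ) such that u = a + ξ f on Ω. -/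
open scoped RealInnerProductSpace

/-- If `f` is constant on an open neighborhood of `x`, its gradient at `x` is zero. -/
lemma gradient_eq_zero_of_locally_const {E : Type*} [NormedAddCommGroup E]
    [InnerProductSpace ℝ E] [CompleteSpace E] {f : E → ℝ} {x : E} {W : Set E}
    (hW : IsOpen W) (hx : x ∈ W) (hc : ∀ y ∈ W, f y = f x) : gradient f x = 0 := by
  have heq : f =ᶠ[nhds x] fun _ => f x :=
    Filter.eventuallyEq_of_mem (hW.mem_nhds hx) hc
  have : fderiv ℝ f x = fderiv ℝ (fun _ => f x) x := heq.fderiv_eq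
  rw [gradient, this, fderiv_fun_const]
  simp

/-- Patching local essentially-scalar representations: if `u ∈ C²(Ω, ℝ^N)` on an open
connected `Ω` is covered by open balls on each of which `u = a_m + ξ_m f_m` with `ξ_m` a unit
vector, `f_m` C² and `|Df_m| > 0`, then there is a single global representation
`u = a + ξ f` on `Ω`. -/
theorem patch_scalar_representation {n N : ℕ} {ι : Type*}
    (Ω : Set (EuclideanSpace ℝ (Fin n))) (hΩ : IsOpen Ω) (hconn : IsConnected Ω)
    (u : EuclideanSpace ℝ (Fin n) → EuclideanSpace ℝ (Fin N))
    (hu : ContDiffOn ℝ 2 u Ω)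
    (c : ι → EuclideanSpace ℝ (Fin n)) (ρ : ι → ℝ)
    (hsub : ∀ m, Metric.ball (c m) (ρ m) ⊆ Ω)
    (hcover : Ω ⊆ ⋃ m, Metric.ball (c m) (ρ m))
    (a : ι → EuclideanSpace ℝ (Fin N)) (ξ : ι → EuclideanSpace ℝ (Fin N))
    (hξ : ∀ m, ‖ξ m‖ = 1)
    (f : ι → EuclideanSpace ℝ (Fin n) → ℝ)
    (hf : ∀ m, ContDiffOn ℝ 2 (f m) (Metric.ball (c m) (ρ m)))
    (hrep : ∀ m, ∀ x ∈ Metric.ball (c m) (ρ m), u x = a m + f m x • ξ m)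
    (hgrad : ∀ m, ∀ x ∈ Metric.ball (c m) (ρ m), gradient (f m) x ≠ 0) :
    ∃ (A : EuclideanSpace ℝ (Fin N)) (Ξ : EuclideanSpace ℝ (Fin N))
      (F : EuclideanSpace ℝ (Fin n) → ℝ),
      ‖Ξ‖ = 1 ∧ ContDiffOn ℝ 2 F Ω ∧ ∀ x ∈ Ω, u x = A + F x • Ξ := by
  obtain ⟨x₀, hx₀⟩ := hconn.nonempty
  obtain ⟨m₀, hm₀⟩ := Set.mem_iUnion.1 (hcover hx₀)
  set A := a m₀ with hA
  set Ξ := ξ m₀ with hΞ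
  -- the line condition
  set L : EuclideanSpace ℝ (Fin N) → Prop := fun v => ∃ t : ℝ, v = A + t • Ξ with hL
  -- key local-to-ball propagation
  have key : ∀ m, ∀ x ∈ Metric.ball (c m) (ρ m), ∀ ε > 0,
      Metric.ball x ε ⊆ Metric.ball (c m) (ρ m) →
      (∀ z ∈ Metric.ball x ε, L (u z)) → ∀ z ∈ Metric.ball (c m) (ρ m), L (u z) := by
    intro m x hxm ε hε hWm hWL z hz
    -- f m is nonconstant on the small ball
    have hxW : x ∈ Metric.ball x ε := Metric.mem_ball_self hε
    have hnc : ∃ y ∈ Metric.ball x ε, f m y ≠ f m x := by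
      by_contra h
      push_neg at h
      exact hgrad m x hxm (gradient_eq_zero_of_locally_const Metric.isOpen_ball hxW h)
    obtain ⟨y, hyW, hfy⟩ := hnc
    obtain ⟨t, ht⟩ := hWL x hxW
    obtain ⟨t', ht'⟩ := hWL y hyW
    have hux := hrep m x hxm
    have huy := hrep m y (hWm hyW)
    -- (f m y - f m x) • ξ m = (t' - t) • Ξ
    have hdiff : (f m y - f m x) • ξ m = (t' - t) • Ξ := by
      have : u y - u x = u y - u x := rfl
      rw [sub_smul, sub_smul]
      have h1 : u y - u x = f m y • ξ m - f m x • ξ m := by rw [hux, huy]; abel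
      have h2 : u y - u x = t' • Ξ - t • Ξ := by rw [ht, ht']; abel
      rw [← h1, h2]
    have hd : f m y - f m x ≠ 0 := sub_ne_zero.2 hfy
    have hξm : ξ m = ((t' - t) / (f m y - f m x)) • Ξ := by
      have := congrArg (fun v => (f m y - f m x)⁻¹ • v) hdiff
      simpa [smul_smul, inv_mul_cancel₀ hd, div_eq_inv_mul, mul_comm] using this
    refine ⟨t + (f m z - f m x) * ((t' - t) / (f m y - f m x)), ?_⟩
    have huz := hrep m z hz
    have : u z = u x + (f m z - f m x) • ξ m := by
      rw [hux, huz, sub_smul]; abel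
    rw [this, ht, hξm, smul_smul, add_smul]
    abel
  -- connectedness: every point of Ω lies on the line
  have hall : ∀ x ∈ Ω, L (u x) := by
    set U : Set (EuclideanSpace ℝ (Fin n)) :=
      {x | ∃ ε > 0, Metric.ball x ε ⊆ Ω ∧ ∀ z ∈ Metric.ball x ε, L (u z)} with hU
    set good : ι → Prop := fun m => ∀ z ∈ Metric.ball (c m) (ρ m), L (u z) with hgood
    set V : Set (EuclideanSpace ℝ (Fin n)) :=
      ⋃ m ∈ {m | ¬ good m}, Metric.ball (c m) (ρ m) with hV
    have hUopen : IsOpen U := by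
      refine Metric.isOpen_iff.2 ?_
      rintro x ⟨ε, hε, hεΩ, hεL⟩
      refine ⟨ε, hε, ?_⟩
      intro y hy
      refine ⟨ε - dist y x, by simp [Metric.mem_ball.1 hy], ?_, ?_⟩
      · exact fun z hz => hεΩ (Metric.mem_ball.1 (by
          have := Metric.mem_ball.1 hz
          exact Metric.mem_ball.2 (lt_of_le_of_lt (dist_triangle z y x) (by linarith))))
      · intro z hz
        refine hεL z (Metric.mem_ball.2 ?_)
        have := Metric.mem_ball.1 hz
        exact lt_of_le_of_lt (dist_triangle z y x) (by linarith)
    have hVopen : IsOpen V := isOpen_biUnion fun m _ => Metric.isOpen_ball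
    have hΩUV : Ω ⊆ U ∪ V := by
      intro x hx
      obtain ⟨m, hm⟩ := Set.mem_iUnion.1 (hcover hx)
      by_cases hg : good m
      · left
        obtain ⟨ε, hε, hεball⟩ := Metric.isOpen_iff.1 Metric.isOpen_ball x hm
        exact ⟨ε, hε, fun z hz => hsub m (hεball hz), fun z hz => hg z (hεball hz)⟩
      · right
        exact Set.mem_biUnion hg hm
    have hdisj : ¬ (Ω ∩ (U ∩ V)).Nonempty := by
      rintro ⟨x, hxΩ, hxU, hxV⟩
      obtain ⟨m, hm, hxm⟩ := Set.mem_iUnion₂.1 hxV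
      obtain ⟨ε, hε, hεΩ, hεL⟩ := hxU
      obtain ⟨ε', hε', hε'ball⟩ := Metric.isOpen_iff.1 Metric.isOpen_ball x hxm
      set δ := min ε ε' with hδ
      have hδpos : 0 < δ := lt_min hε hε'
      have hδm : Metric.ball x δ ⊆ Metric.ball (c m) (ρ m) :=
        (Metric.ball_subset_ball (min_le_right ε ε')).trans hε'ball
      have hδL : ∀ z ∈ Metric.ball x δ, L (u z) :=
        fun z hz => hεL z (Metric.ball_subset_ball (min_le_left ε ε') hz)
      exact hm (key m x hxm δ hδpos hδm hδL)
    have hΩU : (Ω ∩ U).Nonempty := by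
      refine ⟨x₀, hx₀, ?_⟩
      obtain ⟨ε, hε, hεball⟩ := Metric.isOpen_iff.1 Metric.isOpen_ball x₀ hm₀
      refine ⟨ε, hε, fun z hz => hsub m₀ (hεball hz), fun z hz => ?_⟩
      exact ⟨f m₀ z, hrep m₀ z (hεball hz)⟩
    have hΩsubU : Ω ⊆ U := by
      by_contra hns
      obtain ⟨x, hxΩ, hxU⟩ := Set.not_subset.1 hns
      have hxV : x ∈ V := (hΩUV hxΩ).resolve_left hxU
      exact hdisj (hconn.isPreconnected U V hUopen hVopen hΩUV hΩU ⟨x, hxΩ, hxV⟩)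
    intro x hx
    obtain ⟨ε, hε, _, hεL⟩ := hΩsubU hx
    exact hεL x (Metric.mem_ball_self hε)
  -- define the global scalar
  refine ⟨A, Ξ, fun x => ⟪u x - A, Ξ⟫, hξ m₀, ?_, ?_⟩
  · have h1 : ContDiffOn ℝ 2 (fun x => u x - A) Ω := hu.sub contDiffOn_const
    have h2 : ContDiffOn ℝ 2 (fun x => (innerSL ℝ Ξ) (u x - A)) Ω :=
      (innerSL ℝ Ξ).contDiff.comp_contDiffOn h1
    exact h2.congr fun x _ => by
      simp only [innerSL_apply_apply]; exact real_inner_comm _ _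
  · intro x hx
    obtain ⟨t, ht⟩ := hall x hx
    have h : ⟪u x - A, Ξ⟫ = t := by
      rw [ht, add_sub_cancel_left, real_inner_smul_left, real_inner_self_eq_norm_sq]
      rw [hΞ, hξ m₀]; ring
    show u x = A + (⟪u x - A, Ξ⟫) • Ξ
    rw [h]; exact ht
end
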